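/- arXiv:2206.00714 — 2 statements merged into one kernel-verified Lean document; each statement's English description precedes it below -/
import Mathlib

section
/- Let (X,d) be a compact metric space, f_{1,∞} an NDS on X, ψ ∈ C(X,ℝ), μ a Borel probability measure on X, Z ⊆ X, and s ∈ ℝ. If P_μ(x,ψ) ≤ s for every x ∈ Z, then P^B_{f_{1,∞}}(Z,ψ) ≤ s and P^W_{f_{1,∞}}(Z,ψ) ≤ s. -/
open Filter MeasureTheory Set ENNReal

noncomputable section

variable {X : Type} [MetricSpace X]

/-- The iterate `f_1^n = f_n ∘ ⋯ ∘ f_1` of the NDS `f`, where `f 0` is the first map `f_1`. -/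
def nIter (f : ℕ → X → X) : ℕ → X → X
  | 0 => id
  | n + 1 => f n ∘ nIter f n

/-- The Bowen (dynamical) ball `B_n(x, ε)` for the Bowen metric
`d_n(x,y) = max_{0 ≤ j < n} d(f_1^j x, f_1^j y)`. -/
def bowenBall (f : ℕ → X → X) (n : ℕ) (x : X) (ε : ℝ) : Set X :=
  {y | ∀ j < n, dist (nIter f j x) (nIter f j y) < ε}

/-- The Birkhoff sum `S_{1,n} ψ (x) = ∑_{j=0}^{n-1} ψ(f_1^j x)`. -/
def birkSum (f : ℕ → X → X) (ψ : X → ℝ) (n : ℕ) (x : X) : ℝ :=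
  ∑ j ∈ Finset.range n, ψ (nIter f j x)

/-- `S_{1,n} ψ (x, ε) = sup_{y ∈ B_n(x,ε)} S_{1,n} ψ (y)`. -/
def birkSupBall (f : ℕ → X → X) (ψ : X → ℝ) (n : ℕ) (x : X) (ε : ℝ) : ℝ :=
  sSup (birkSum f ψ n '' bowenBall f n x ε)

/-- `M(n, α, ε, Z, ψ)`: infimum of `∑_i exp(-α n_i + S_{1,n_i}ψ(x_i, ε))` over all finite or
countable covers `Z ⊆ ⋃_i B_{n_i}(x_i, ε)` with `n_i ≥ n`. -/
def Mpre (f : ℕ → X → X) (ψ : X → ℝ) (Z : Set X) (n : ℕ) (α ε : ℝ) : ℝ≥0∞ :=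
  sInf { S : ℝ≥0∞ | ∃ (u : Set ℕ) (c : ℕ → X) (m : ℕ → ℕ),
    (∀ i ∈ u, n ≤ m i) ∧ (Z ⊆ ⋃ i ∈ u, bowenBall f (m i) (c i) ε) ∧
    S = ∑' i : u, ENNReal.ofReal (Real.exp (-α * (m i : ℝ) + birkSupBall f ψ (m i) (c i) ε)) }

/-- `𝓜(n, α, ε, Z, ψ)`: as `Mpre` but with the Birkhoff sums evaluated at the centers. -/
def MpreC (f : ℕ → X → X) (ψ : X → ℝ) (Z : Set X) (n : ℕ) (α ε : ℝ) : ℝ≥0∞ :=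
  sInf { S : ℝ≥0∞ | ∃ (u : Set ℕ) (c : ℕ → X) (m : ℕ → ℕ),
    (∀ i ∈ u, n ≤ m i) ∧ (Z ⊆ ⋃ i ∈ u, bowenBall f (m i) (c i) ε) ∧
    S = ∑' i : u, ENNReal.ofReal (Real.exp (-α * (m i : ℝ) + birkSum f ψ (m i) (c i))) }

/-- `M(α, ε, Z, ψ) = lim_{n→∞} M(n, α, ε, Z, ψ)`; the quantity is nondecreasing in `n`,
so the limit is the supremum. -/
def Mlim (f : ℕ → X → X) (ψ : X → ℝ) (Z : Set X) (α ε : ℝ) : ℝ≥0∞ :=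
  ⨆ n : ℕ, Mpre f ψ Z n α ε

/-- `𝓜(α, ε, Z, ψ) = lim_{n→∞} 𝓜(n, α, ε, Z, ψ)`. -/
def MlimC (f : ℕ → X → X) (ψ : X → ℝ) (Z : Set X) (α ε : ℝ) : ℝ≥0∞ :=
  ⨆ n : ℕ, MpreC f ψ Z n α ε

/-- `P^B(ε, Z, ψ) = inf {α : M(α, ε, Z, ψ) = 0}`, as an extended real. -/
def PBeps (f : ℕ → X → X) (ψ : X → ℝ) (Z : Set X) (ε : ℝ) : EReal :=
  sInf (Real.toEReal '' {α : ℝ | Mlim f ψ Z α ε = 0})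

/-- `𝒫^B(ε, Z, ψ) = inf {α : 𝓜(α, ε, Z, ψ) = 0}`. -/
def PBCeps (f : ℕ → X → X) (ψ : X → ℝ) (Z : Set X) (ε : ℝ) : EReal :=
  sInf (Real.toEReal '' {α : ℝ | MlimC f ψ Z α ε = 0})

/-- The Pesin–Pitskel topological pressure `P^B_{f_{1,∞}}(Z, ψ) = lim_{ε→0} P^B(ε, Z, ψ)`. -/
def PB (f : ℕ → X → X) (ψ : X → ℝ) (Z : Set X) : EReal :=
  limUnder (nhdsWithin 0 (Ioi 0)) fun ε : ℝ => PBeps f ψ Z ε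

/-- `W(n, α, ε, Z, ψ)`: the weighted analogue of `Mpre`. -/
def Wpre (f : ℕ → X → X) (ψ : X → ℝ) (Z : Set X) (n : ℕ) (α ε : ℝ) : ℝ≥0∞ :=
  sInf { S : ℝ≥0∞ | ∃ (u : Set ℕ) (cx : ℕ → X) (m : ℕ → ℕ) (c : ℕ → ℝ),
    (∀ i ∈ u, 0 < c i) ∧ (∀ i ∈ u, n ≤ m i) ∧
    (∀ z ∈ Z, 1 ≤ ∑' i : u,
      (bowenBall f (m i) (cx i) ε).indicator (fun _ => ENNReal.ofReal (c i)) z) ∧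
    S = ∑' i : u, ENNReal.ofReal (c i) *
      ENNReal.ofReal (Real.exp (-α * (m i : ℝ) + birkSupBall f ψ (m i) (cx i) ε)) }

/-- `W(α, ε, Z, ψ) = lim_{n→∞} W(n, α, ε, Z, ψ)`. -/
def Wlim (f : ℕ → X → X) (ψ : X → ℝ) (Z : Set X) (α ε : ℝ) : ℝ≥0∞ :=
  ⨆ n : ℕ, Wpre f ψ Z n α ε

/-- `P^W(ε, Z, ψ)`: the critical value of `α` at which `W(α, ε, Z, ψ)` jumps from `∞` to `0`. -/
def PWeps (f : ℕ → X → X) (ψ : X → ℝ) (Z : Set X) (ε : ℝ) : EReal :=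
  sInf (Real.toEReal '' {α : ℝ | Wlim f ψ Z α ε = 0})

/-- The weighted topological pressure `P^W_{f_{1,∞}}(Z, ψ) = lim_{ε→0} P^W(ε, Z, ψ)`. -/
def PW (f : ℕ → X → X) (ψ : X → ℝ) (Z : Set X) : EReal :=
  limUnder (nhdsWithin 0 (Ioi 0)) fun ε : ℝ => PWeps f ψ Z ε

/-- Bowen topological entropy `h^B_top(f_{1,∞}, Z)`, i.e. pressure of the zero potential. -/
def hBtop (f : ℕ → X → X) (Z : Set X) : EReal := PB f (fun _ => 0) Z

/-- Weighted Bowen topological entropy `h^{WB}_top(f_{1,∞}, Z)`. -/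
def hWBtop (f : ℕ → X → X) (Z : Set X) : EReal := PW f (fun _ => 0) Z

/-- `EReal → ℝ≥0∞`, sending `⊤` to `⊤` and everything negative to `0`. -/
def ERealToENNReal (x : EReal) : ℝ≥0∞ := if x = ⊤ then ⊤ else ENNReal.ofReal x.toReal

variable [MeasurableSpace X]

/-- The measure-theoretic local pressure
`P_μ(x,ψ) = lim_{ε→0} liminf_{n→∞} (-log μ(B_n(x,ε)) + S_{1,n}ψ(x))/n`. -/
def Ploc (f : ℕ → X → X) (μ : Measure X) (ψ : X → ℝ) (x : X) : EReal :=
  limUnder (nhdsWithin 0 (Ioi 0)) fun ε : ℝ =>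
    Filter.atTop.liminf fun n : ℕ =>
      (((n : ℝ)⁻¹ : ℝ) : EReal) *
        (-(ENNReal.log (μ (bowenBall f n x ε))) + ((birkSum f ψ n x : ℝ) : EReal))

/-- The integral of an extended-real-valued function: the difference of the lower integrals of
its positive and negative parts. -/
def ERealIntegral (μ : Measure X) (g : X → EReal) : EReal :=
  ((∫⁻ x, ERealToENNReal (g x) ∂μ : ℝ≥0∞) : EReal)
    - ((∫⁻ x, ERealToENNReal (-(g x)) ∂μ : ℝ≥0∞) : EReal)

/-- The measure-theoretic pressure `P_μ(X, ψ) = ∫ P_μ(x, ψ) dμ(x)`. -/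
def Pmeas (f : ℕ → X → X) (μ : Measure X) (ψ : X → ℝ) : EReal :=
  ERealIntegral μ (Ploc f μ ψ)

/-- The measure-theoretic local lower entropy `h̲_μ(f_{1,∞}, x)`. -/
def hloc (f : ℕ → X → X) (μ : Measure X) (x : X) : EReal := Ploc f μ (fun _ => 0) x

/-- The measure-theoretic lower entropy `h̲_μ(f_{1,∞}) = ∫ h̲_μ(f_{1,∞}, x) dμ(x)`. -/
def hmeas (f : ℕ → X → X) (μ : Measure X) : EReal := Pmeas f μ (fun _ => 0)


set_option linter.unusedSectionVars false

section Aux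

variable {f : ℕ → X → X} {ψ : X → ℝ}

lemma continuous_nIter (hf : ∀ n, Continuous (f n)) (n : ℕ) : Continuous (nIter f n) := by
  induction n with
  | zero => exact continuous_id
  | succ n ih => exact (hf n).comp ih

lemma self_mem_bowenBall {n : ℕ} {x : X} {ε : ℝ} (hε : 0 < ε) : x ∈ bowenBall f n x ε :=
  fun _ _ => by simpa using hε

lemma bowenBall_mono {n : ℕ} {x : X} {ε ε' : ℝ} (h : ε ≤ ε') :
    bowenBall f n x ε ⊆ bowenBall f n x ε' := fun _ hy j hj => lt_of_lt_of_le (hy j hj) h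

lemma mem_bowenBall_symm {n : ℕ} {x y : X} {ε : ℝ} :
    y ∈ bowenBall f n x ε ↔ x ∈ bowenBall f n y ε := by
  constructor <;> intro h j hj <;> · rw [dist_comm]; exact h j hj

lemma mem_bowenBall_two {n : ℕ} {x y z : X} {ε : ℝ}
    (h1 : z ∈ bowenBall f n x ε) (h2 : z ∈ bowenBall f n y ε) :
    y ∈ bowenBall f n x (2 * ε) := by
  intro j hj
  calc dist (nIter f j x) (nIter f j y)
      ≤ dist (nIter f j x) (nIter f j z) + dist (nIter f j z) (nIter f j y) :=
        dist_triangle _ _ _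
    _ < ε + ε := by
        refine add_lt_add (h1 j hj) ?_
        rw [dist_comm]; exact h2 j hj
    _ = 2 * ε := by ring

lemma isOpen_bowenBall (hf : ∀ k, Continuous (f k)) {n : ℕ} {x : X} {ε : ℝ} :
    IsOpen (bowenBall f n x ε) := by
  have he : bowenBall f n x ε
      = ⋂ j ∈ Finset.range n, {y | dist (nIter f j x) (nIter f j y) < ε} := by
    ext y; simp [bowenBall]
  rw [he]
  exact isOpen_biInter_finset fun j _ =>
    isOpen_lt (continuous_const.dist (continuous_nIter hf j)) continuous_const

lemma exists_sep [CompactSpace X] (hf : ∀ k, Continuous (f k)) (n : ℕ) {ε : ℝ} (hε : 0 < ε)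
    (A : Set X) :
    ∃ E : Finset X, ((E : Set X) ⊆ A) ∧ (A ⊆ ⋃ x ∈ E, bowenBall f n x (2 * ε)) ∧
      ((E : Set X).PairwiseDisjoint fun x => bowenBall f n x ε) := by
  have hzorn := zorn_subset
      {E : Set X | E ⊆ A ∧ E.Pairwise fun x y => y ∉ bowenBall f n x (2 * ε)} (by
    intro c hc hchain
    refine ⟨⋃₀ c, ⟨sUnion_subset fun t ht => (hc ht).1, ?_⟩, fun s hs => subset_sUnion_of_mem hs⟩
    intro x hx y hy hxy
    obtain ⟨t1, ht1, hxt⟩ := hx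
    obtain ⟨t2, ht2, hyt⟩ := hy
    rcases hchain.total ht1 ht2 with hsub | hsub
    · exact (hc ht2).2 (hsub hxt) hyt hxy
    · exact (hc ht1).2 hxt (hsub hyt) hxy)
  obtain ⟨E, hE⟩ := hzorn
  obtain ⟨hEA, hEsep⟩ := hE.prop
  have hcov : (univ : Set X) ⊆ ⋃ y : X, bowenBall f n y ε := fun y _ =>
    mem_iUnion.2 ⟨y, self_mem_bowenBall hε⟩
  obtain ⟨t, ht⟩ := isCompact_univ.elim_finite_subcover (fun y : X => bowenBall f n y ε)
    (fun _ => isOpen_bowenBall hf) hcov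
  have hfin : E.Finite := by
    have hsub : E ⊆ ⋃ y ∈ t, E ∩ bowenBall f n y ε := by
      intro a ha
      have := ht (mem_univ a)
      rw [mem_iUnion₂] at this
      obtain ⟨y, hy, hmem⟩ := this
      exact mem_iUnion₂.mpr ⟨y, hy, ha, hmem⟩
    refine Finite.subset (Finite.biUnion t.finite_toSet fun y _ => ?_) hsub
    refine Set.Subsingleton.finite ?_
    rintro a ⟨haE, haB⟩ b ⟨hbE, hbB⟩
    by_contra hab
    exact hEsep haE hbE hab
      (mem_bowenBall_two (mem_bowenBall_symm.mp haB) (mem_bowenBall_symm.mp hbB))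
  have hcover : A ⊆ ⋃ x ∈ E, bowenBall f n x (2 * ε) := by
    intro a ha
    by_contra hna
    rw [mem_iUnion₂] at hna
    push_neg at hna
    have haE : a ∉ E := by
      intro haE
      exact hna a haE (self_mem_bowenBall (by linarith))
    have hins : insert a E ∈
        {E : Set X | E ⊆ A ∧ E.Pairwise fun x y => y ∉ bowenBall f n x (2 * ε)} := by
      refine ⟨insert_subset ha hEA, ?_⟩
      intro x hx y hy hxy
      rcases hx with rfl | hx
      · rcases hy with rfl | hy
        · exact absurd rfl hxy
        · intro hmem
          exact hna y hy (mem_bowenBall_symm.mp hmem)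
      · rcases hy with rfl | hy
        · exact hna x hx
        · exact hEsep hx hy hxy
    have := hE.2 hins (subset_insert a E)
    exact haE (this (mem_insert a E))
  have hdisj : (E : Set X).PairwiseDisjoint fun x => bowenBall f n x ε := by
    intro x hx y hy hxy
    rw [Function.onFun, Set.disjoint_left]
    intro z hzx hzy
    exact hEsep hx hy hxy (mem_bowenBall_two hzx hzy)
  refine ⟨hfin.toFinset, ?_, ?_, ?_⟩
  · rw [Set.Finite.coe_toFinset]; exact hEA
  · intro a ha
    have := hcover ha
    rw [mem_iUnion₂] at this ⊢
    obtain ⟨x, hx, hmem⟩ := this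
    exact ⟨x, by rwa [Set.Finite.mem_toFinset], hmem⟩
  · rw [Set.Finite.coe_toFinset]; exact hdisj

lemma abs_birkSum_le {C : ℝ} (hC : ∀ x, |ψ x| ≤ C) (n : ℕ) (x : X) :
    |birkSum f ψ n x| ≤ n * C := by
  calc |birkSum f ψ n x| ≤ ∑ j ∈ Finset.range n, |ψ (nIter f j x)| :=
        Finset.abs_sum_le_sum_abs _ _
    _ ≤ ∑ _j ∈ Finset.range n, C := Finset.sum_le_sum fun j _ => hC _
    _ = n * C := by simp [mul_comm]

lemma bddAbove_birk {C : ℝ} (hC : ∀ x, |ψ x| ≤ C) (n : ℕ) (x : X) {ε : ℝ} :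
    BddAbove (birkSum f ψ n '' bowenBall f n x ε) := by
  refine ⟨n * C, ?_⟩
  rintro _ ⟨y, _, rfl⟩
  exact (abs_le.mp (abs_birkSum_le hC n y)).2

lemma birkSum_le_birkSupBall {C : ℝ} (hC : ∀ x, |ψ x| ≤ C) {n : ℕ} {x : X} {ε : ℝ}
    (hε : 0 < ε) : birkSum f ψ n x ≤ birkSupBall f ψ n x ε :=
  le_csSup (bddAbove_birk hC n x) (mem_image_of_mem _ (self_mem_bowenBall hε))

lemma birkSupBall_le {δ ε : ℝ} (hψδ : ∀ a b : X, dist a b < ε → |ψ a - ψ b| ≤ δ) (hε : 0 < ε)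
    (n : ℕ) (x : X) : birkSupBall f ψ n x ε ≤ birkSum f ψ n x + n * δ := by
  refine csSup_le ⟨birkSum f ψ n x, mem_image_of_mem _ (self_mem_bowenBall hε)⟩ ?_
  rintro _ ⟨y, hy, rfl⟩
  have hterm : ∀ j ∈ Finset.range n, ψ (nIter f j y) ≤ ψ (nIter f j x) + δ := by
    intro j hj
    have h1 := hψδ (nIter f j y) (nIter f j x)
      (by rw [dist_comm]; exact hy j (Finset.mem_range.mp hj))
    have := abs_le.mp h1
    linarith [this.1, this.2]
  calc birkSum f ψ n y ≤ ∑ j ∈ Finset.range n, (ψ (nIter f j x) + δ) :=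
        Finset.sum_le_sum hterm
    _ = birkSum f ψ n x + n * δ := by
        rw [Finset.sum_add_distrib]
        simp [birkSum, mul_comm]

lemma exists_modulus [CompactSpace X] (hψ : Continuous ψ) {δ : ℝ} (hδ : 0 < δ) :
    ∃ ε0 > 0, ∀ ε : ℝ, 0 < ε → ε ≤ ε0 →
      ∀ (n : ℕ) (x : X), birkSupBall f ψ n x ε ≤ birkSum f ψ n x + n * δ := by
  obtain ⟨ε0, hε0, H⟩ := Metric.uniformContinuous_iff.mp
    (CompactSpace.uniformContinuous_of_continuous hψ) δ hδ
  refine ⟨ε0, hε0, fun ε hε hεle n x => birkSupBall_le (fun a b hab => ?_) hε n x⟩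
  have := H (lt_of_lt_of_le hab hεle)
  rw [Real.dist_eq] at this
  exact this.le

end Aux


/-- Centered weighted pre-pressure (auxiliary). -/
def WpreC (f : ℕ → X → X) (ψ : X → ℝ) (Z : Set X) (n : ℕ) (α ε : ℝ) : ℝ≥0∞ :=
  sInf { S : ℝ≥0∞ | ∃ (u : Set ℕ) (cx : ℕ → X) (m : ℕ → ℕ) (c : ℕ → ℝ),
    (∀ i ∈ u, 0 < c i) ∧ (∀ i ∈ u, n ≤ m i) ∧
    (∀ z ∈ Z, 1 ≤ ∑' i : u,
      (bowenBall f (m i) (cx i) ε).indicator (fun _ => ENNReal.ofReal (c i)) z) ∧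
    S = ∑' i : u, ENNReal.ofReal (c i) *
      ENNReal.ofReal (Real.exp (-α * (m i : ℝ) + birkSum f ψ (m i) (cx i))) }

def WlimC (f : ℕ → X → X) (ψ : X → ℝ) (Z : Set X) (α ε : ℝ) : ℝ≥0∞ :=
  ⨆ n : ℕ, WpreC f ψ Z n α ε

def PWCeps (f : ℕ → X → X) (ψ : X → ℝ) (Z : Set X) (ε : ℝ) : EReal :=
  sInf (Real.toEReal '' {α : ℝ | WlimC f ψ Z α ε = 0})

section Aux2

variable {f : ℕ → X → X} {ψ : X → ℝ} {Z : Set X}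

lemma MpreC_mono_n {n n' : ℕ} {α ε : ℝ} (h : n ≤ n') :
    MpreC f ψ Z n α ε ≤ MpreC f ψ Z n' α ε := by
  apply sInf_le_sInf
  rintro S ⟨u, c, m, h1, h2, rfl⟩
  exact ⟨u, c, m, fun i hi => h.trans (h1 i hi), h2, rfl⟩

lemma MpreC_anti_eps {n : ℕ} {α ε ε' : ℝ} (h : ε ≤ ε') :
    MpreC f ψ Z n α ε' ≤ MpreC f ψ Z n α ε := by
  apply sInf_le_sInf
  rintro S ⟨u, c, m, h1, h2, rfl⟩
  exact ⟨u, c, m, h1, h2.trans (iUnion₂_mono fun i _ => bowenBall_mono h), rfl⟩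

lemma WpreC_anti_eps {n : ℕ} {α ε ε' : ℝ} (h : ε ≤ ε') :
    WpreC f ψ Z n α ε' ≤ WpreC f ψ Z n α ε := by
  apply sInf_le_sInf
  rintro S ⟨u, cx, m, c, h1, h2, h3, rfl⟩
  refine ⟨u, cx, m, c, h1, h2, fun z hz => (h3 z hz).trans (ENNReal.tsum_le_tsum fun i => ?_),
    rfl⟩
  exact Set.indicator_le_indicator_of_subset (bowenBall_mono h) (fun _ => zero_le) z

lemma MpreC_le_Mpre {C : ℝ} (hC : ∀ x, |ψ x| ≤ C) {n : ℕ} {α ε : ℝ} (hε : 0 < ε) :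
    MpreC f ψ Z n α ε ≤ Mpre f ψ Z n α ε := by
  refine le_sInf ?_
  rintro S ⟨u, c, m, h1, h2, rfl⟩
  refine sInf_le_of_le ⟨u, c, m, h1, h2, rfl⟩ (ENNReal.tsum_le_tsum fun i => ?_)
  refine ENNReal.ofReal_le_ofReal (Real.exp_le_exp.mpr ?_)
  have := birkSum_le_birkSupBall (f := f) hC (n := m i.1) (x := c i.1) hε
  linarith

lemma Mpre_le_MpreC {n : ℕ} {α δ ε : ℝ} (hδ : 0 ≤ δ)
    (hmod : ∀ (k : ℕ) (x : X), birkSupBall f ψ k x ε ≤ birkSum f ψ k x + k * δ) :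
    Mpre f ψ Z n (α + δ) ε ≤ MpreC f ψ Z n α ε := by
  refine le_sInf ?_
  rintro S ⟨u, c, m, h1, h2, rfl⟩
  refine sInf_le_of_le ⟨u, c, m, h1, h2, rfl⟩ (ENNReal.tsum_le_tsum fun i => ?_)
  refine ENNReal.ofReal_le_ofReal (Real.exp_le_exp.mpr ?_)
  have h3 := hmod (m i.1) (c i.1)
  have h4 : (0:ℝ) ≤ (m i.1 : ℝ) * δ := mul_nonneg (Nat.cast_nonneg _) hδ
  nlinarith

lemma WpreC_le_Wpre {C : ℝ} (hC : ∀ x, |ψ x| ≤ C) {n : ℕ} {α ε : ℝ} (hε : 0 < ε) :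
    WpreC f ψ Z n α ε ≤ Wpre f ψ Z n α ε := by
  refine le_sInf ?_
  rintro S ⟨u, cx, m, c, h1, h2, h3, rfl⟩
  refine sInf_le_of_le ⟨u, cx, m, c, h1, h2, h3, rfl⟩ (ENNReal.tsum_le_tsum fun i => ?_)
  refine mul_le_mul_right (ENNReal.ofReal_le_ofReal (Real.exp_le_exp.mpr ?_)) _
  have := birkSum_le_birkSupBall (f := f) hC (n := m i.1) (x := cx i.1) hε
  linarith

lemma Wpre_le_WpreC {n : ℕ} {α δ ε : ℝ} (hδ : 0 ≤ δ)
    (hmod : ∀ (k : ℕ) (x : X), birkSupBall f ψ k x ε ≤ birkSum f ψ k x + k * δ) :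
    Wpre f ψ Z n (α + δ) ε ≤ WpreC f ψ Z n α ε := by
  refine le_sInf ?_
  rintro S ⟨u, cx, m, c, h1, h2, h3, rfl⟩
  refine sInf_le_of_le ⟨u, cx, m, c, h1, h2, h3, rfl⟩ (ENNReal.tsum_le_tsum fun i => ?_)
  refine mul_le_mul_right (ENNReal.ofReal_le_ofReal (Real.exp_le_exp.mpr ?_)) _
  have h3' := hmod (m i.1) (cx i.1)
  have h4 : (0:ℝ) ≤ (m i.1 : ℝ) * δ := mul_nonneg (Nat.cast_nonneg _) hδ
  nlinarith

lemma WpreC_le_MpreC {n : ℕ} {α ε : ℝ} : WpreC f ψ Z n α ε ≤ MpreC f ψ Z n α ε := by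
  refine le_sInf ?_
  rintro S ⟨u, c, m, h1, h2, rfl⟩
  have hcov : ∀ z ∈ Z, 1 ≤ ∑' i : u,
      (bowenBall f (m i.1) (c i.1) ε).indicator (fun _ => ENNReal.ofReal (1 : ℝ)) z := by
    intro z hz
    have := h2 hz
    rw [mem_iUnion₂] at this
    obtain ⟨i, hi, hmem⟩ := this
    refine le_trans ?_ (ENNReal.le_tsum (⟨i, hi⟩ : u))
    rw [Set.indicator_of_mem hmem]
    simp
  refine sInf_le_of_le ⟨u, c, m, fun _ => 1, fun i _ => one_pos, h1, hcov, rfl⟩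
    (le_of_eq (by simp))

end Aux2


section Aux3

variable {f : ℕ → X → X} {ψ : X → ℝ} {Z : Set X}

lemma MlimC_eq_zero_iff {α ε : ℝ} :
    MlimC f ψ Z α ε = 0 ↔ ∀ n, MpreC f ψ Z n α ε = 0 := by
  rw [MlimC, iSup_eq_zero]

lemma WlimC_eq_zero_iff {α ε : ℝ} :
    WlimC f ψ Z α ε = 0 ↔ ∀ n, WpreC f ψ Z n α ε = 0 := by
  rw [WlimC, iSup_eq_zero]

lemma PBCeps_anti : AntitoneOn (fun ε => PBCeps f ψ Z ε) (Ioi (0:ℝ)) := by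
  intro ε _ ε' _ h
  refine sInf_le_sInf (image_mono ?_)
  intro α hα
  rw [mem_setOf_eq, MlimC_eq_zero_iff] at hα ⊢
  exact fun n => le_antisymm ((MpreC_anti_eps h).trans (hα n).le) (zero_le)

lemma PWCeps_anti : AntitoneOn (fun ε => PWCeps f ψ Z ε) (Ioi (0:ℝ)) := by
  intro ε _ ε' _ h
  refine sInf_le_sInf (image_mono ?_)
  intro α hα
  rw [mem_setOf_eq, WlimC_eq_zero_iff] at hα ⊢
  exact fun n => le_antisymm ((WpreC_anti_eps h).trans (hα n).le) (zero_le)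

lemma PBCeps_le_PBeps {C : ℝ} (hC : ∀ x, |ψ x| ≤ C) {ε : ℝ} (hε : 0 < ε) :
    PBCeps f ψ Z ε ≤ PBeps f ψ Z ε := by
  refine sInf_le_sInf (image_mono ?_)
  intro α hα
  rw [mem_setOf_eq, Mlim, iSup_eq_zero] at hα
  rw [mem_setOf_eq, MlimC_eq_zero_iff]
  exact fun n => le_antisymm ((MpreC_le_Mpre hC hε).trans (hα n).le) (zero_le)

lemma PWCeps_le_PWeps {C : ℝ} (hC : ∀ x, |ψ x| ≤ C) {ε : ℝ} (hε : 0 < ε) :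
    PWCeps f ψ Z ε ≤ PWeps f ψ Z ε := by
  refine sInf_le_sInf (image_mono ?_)
  intro α hα
  rw [mem_setOf_eq, Wlim, iSup_eq_zero] at hα
  rw [mem_setOf_eq, WlimC_eq_zero_iff]
  exact fun n => le_antisymm ((WpreC_le_Wpre hC hε).trans (hα n).le) (zero_le)

lemma PWCeps_le_PBCeps {ε : ℝ} : PWCeps f ψ Z ε ≤ PBCeps f ψ Z ε := by
  refine sInf_le_sInf (image_mono ?_)
  intro α hα
  rw [mem_setOf_eq, MlimC_eq_zero_iff] at hα
  rw [mem_setOf_eq, WlimC_eq_zero_iff]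
  exact fun n => le_antisymm (WpreC_le_MpreC.trans (hα n).le) (zero_le)

lemma PBeps_le_add {ε δ : ℝ} (hδ : 0 < δ)
    (hmod : ∀ (k : ℕ) (x : X), birkSupBall f ψ k x ε ≤ birkSum f ψ k x + k * δ) :
    PBeps f ψ Z ε ≤ PBCeps f ψ Z ε + (δ : EReal) := by
  rw [← EReal.sub_le_iff_le_add (Or.inl (EReal.coe_ne_bot δ)) (Or.inl (EReal.coe_ne_top δ))]
  refine le_sInf ?_
  rintro _ ⟨α, hα, rfl⟩
  refine EReal.sub_le_of_le_add' ?_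
  rw [mem_setOf_eq, MlimC_eq_zero_iff] at hα
  have hzero : Mlim f ψ Z (α + δ) ε = 0 := by
    rw [Mlim, iSup_eq_zero]
    exact fun n => le_antisymm ((Mpre_le_MpreC hδ.le hmod).trans (hα n).le) (zero_le)
  calc PBeps f ψ Z ε ≤ ((α + δ : ℝ) : EReal) := sInf_le ⟨α + δ, hzero, rfl⟩
    _ = (δ : EReal) + (α : EReal) := by rw [← EReal.coe_add]; norm_num [add_comm]

lemma PWeps_le_add {ε δ : ℝ} (hδ : 0 < δ)
    (hmod : ∀ (k : ℕ) (x : X), birkSupBall f ψ k x ε ≤ birkSum f ψ k x + k * δ) :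
    PWeps f ψ Z ε ≤ PWCeps f ψ Z ε + (δ : EReal) := by
  rw [← EReal.sub_le_iff_le_add (Or.inl (EReal.coe_ne_bot δ)) (Or.inl (EReal.coe_ne_top δ))]
  refine le_sInf ?_
  rintro _ ⟨α, hα, rfl⟩
  refine EReal.sub_le_of_le_add' ?_
  rw [mem_setOf_eq, WlimC_eq_zero_iff] at hα
  have hzero : Wlim f ψ Z (α + δ) ε = 0 := by
    rw [Wlim, iSup_eq_zero]
    exact fun n => le_antisymm ((Wpre_le_WpreC hδ.le hmod).trans (hα n).le) (zero_le)
  calc PWeps f ψ Z ε ≤ ((α + δ : ℝ) : EReal) := sInf_le ⟨α + δ, hzero, rfl⟩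
    _ = (δ : EReal) + (α : EReal) := by rw [← EReal.coe_add]; norm_num [add_comm]

lemma EReal_le_of_forall_add {a : EReal} {s : ℝ}
    (h : ∀ δ : ℝ, 0 < δ → a ≤ ((s + δ : ℝ) : EReal)) : a ≤ (s : EReal) := by
  by_contra hcon
  push_neg at hcon
  obtain ⟨y, hy1, hy2⟩ := EReal.exists_between_coe_real hcon
  have hys : s < y := EReal.coe_lt_coe_iff.mp hy1
  have := h (y - s) (by linarith)
  rw [show s + (y - s) = y by ring] at this
  exact absurd this (not_le.mpr hy2)

lemma tendsto_aux {g h : ℝ → EReal} (hg : AntitoneOn g (Ioi (0:ℝ)))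
    (hgh : ∀ ε : ℝ, 0 < ε → g ε ≤ h ε)
    (hcl : ∀ δ : ℝ, 0 < δ → ∃ ε0 > 0, ∀ ε : ℝ, 0 < ε → ε ≤ ε0 → h ε ≤ g ε + (δ : EReal)) :
    Tendsto h (nhdsWithin 0 (Ioi (0:ℝ))) (nhds (sSup (g '' Ioi 0))) := by
  set L := sSup (g '' Ioi 0) with hL
  rw [tendsto_order]
  constructor
  · intro a ha
    rw [hL, lt_sSup_iff] at ha
    obtain ⟨b, ⟨ε', hε', rfl⟩, hab⟩ := ha
    filter_upwards [Ioc_mem_nhdsGT_of_mem (⟨le_refl (0:ℝ), hε'⟩ : (0:ℝ) ∈ Ico (0:ℝ) ε')]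
      with ε hε
    exact lt_of_lt_of_le hab ((hg hε.1 hε' hε.2).trans (hgh ε hε.1))
  · intro b hb
    obtain ⟨c, hc1, hc2⟩ := EReal.exists_between_coe_real hb
    obtain ⟨c', hc1', hc2'⟩ := EReal.exists_between_coe_real hc2
    have hδ : 0 < c' - c := by
      have := EReal.coe_lt_coe_iff.mp hc1'
      linarith
    obtain ⟨ε0, hε0, hmod⟩ := hcl (c' - c) hδ
    filter_upwards [Ioc_mem_nhdsGT_of_mem (⟨le_refl (0:ℝ), hε0⟩ : (0:ℝ) ∈ Ico (0:ℝ) ε0)]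
      with ε hε
    have h1 : h ε ≤ g ε + ((c' - c : ℝ) : EReal) := hmod ε hε.1 hε.2
    have h2 : g ε ≤ L := le_sSup (mem_image_of_mem g hε.1)
    calc h ε ≤ g ε + ((c' - c : ℝ) : EReal) := h1
      _ ≤ (c : EReal) + ((c' - c : ℝ) : EReal) := by
          exact add_le_add_left (h2.trans hc1.le) _
      _ = ((c') : EReal) := by rw [← EReal.coe_add]; norm_num
      _ < b := hc2'

lemma liminf_le_of_Ploc {μ : Measure X} {x : X} {s : ℝ}
    (h : Ploc f μ ψ x ≤ (s : EReal)) :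
    ∀ ε : ℝ, 0 < ε → atTop.liminf (fun n : ℕ =>
      (((n : ℝ)⁻¹ : ℝ) : EReal) * (-(ENNReal.log (μ (bowenBall f n x ε)))
        + ((birkSum f ψ n x : ℝ) : EReal))) ≤ (s : EReal) := by
  set g : ℝ → EReal := fun ε => atTop.liminf (fun n : ℕ =>
      (((n : ℝ)⁻¹ : ℝ) : EReal) * (-(ENNReal.log (μ (bowenBall f n x ε)))
        + ((birkSum f ψ n x : ℝ) : EReal))) with hg
  have hmul : ∀ (n : ℕ) (w : EReal), (((n : ℝ)⁻¹ : ℝ) : EReal) * w = w / ((n : ℝ) : EReal) := by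
    intro n w
    rw [EReal.div_eq_inv_mul, ← EReal.coe_inv]
  have hanti : AntitoneOn g (Ioi (0:ℝ)) := by
    intro ε hε ε' hε' hle
    refine liminf_le_liminf (Eventually.of_forall fun n => ?_)
    rw [hmul, hmul]
    refine EReal.div_le_div_right_of_nonneg (by exact_mod_cast Nat.cast_nonneg (α := ℝ) n) ?_
    refine add_le_add_left ?_ _
    rw [EReal.neg_le_neg_iff]
    exact ENNReal.log_monotone (measure_mono (bowenBall_mono hle))
  have htend := hanti.tendsto_nhdsGT (OrderTop.bddAbove _)
  have hPl : Ploc f μ ψ x = sSup (g '' Ioi 0) := by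
    unfold Ploc
    exact htend.limUnder_eq
  intro ε hε
  calc g ε ≤ sSup (g '' Ioi 0) := le_sSup (mem_image_of_mem g hε)
    _ ≤ (s : EReal) := hPl ▸ h

end Aux3


section Aux4

variable {f : ℕ → X → X} {ψ : X → ℝ}

set_option maxHeartbeats 1000000 in
lemma MlimC_zero [CompactSpace X] [BorelSpace X] [Nonempty X]
    (hf : ∀ k, Continuous (f k)) (μ : Measure X) [IsProbabilityMeasure μ] (Z : Set X) (s : ℝ)
    (hh : ∀ x ∈ Z, ∀ ε : ℝ, 0 < ε → atTop.liminf (fun n : ℕ =>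
        (((n : ℝ)⁻¹ : ℝ) : EReal) * (-(ENNReal.log (μ (bowenBall f n x ε)))
          + ((birkSum f ψ n x : ℝ) : EReal))) ≤ (s : EReal))
    {δ ε : ℝ} (hδ : 0 < δ) (hε : 0 < ε) :
    MlimC f ψ Z (s + 2 * δ) (2 * ε) = 0 := by
  classical
  set A : ℕ → Set X := fun n => {x | x ∈ Z ∧
    ENNReal.ofReal (Real.exp (birkSum f ψ n x - (s + δ) * n)) ≤ μ (bowenBall f n x ε)}
    with hA
  -- Step 1: every point of Z belongs to A n for arbitrarily large n
  have hstep1 : ∀ (N : ℕ), ∀ x ∈ Z, ∃ n, N ≤ n ∧ x ∈ A n := by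
    intro N x hx
    have hlim := hh x hx ε hε
    have hfreq : ∃ᶠ n : ℕ in atTop, (((n : ℝ)⁻¹ : ℝ) : EReal) *
        (-(ENNReal.log (μ (bowenBall f n x ε))) + ((birkSum f ψ n x : ℝ) : EReal))
        < ((s + δ : ℝ) : EReal) := by
      by_contra hcon
      rw [not_frequently] at hcon
      have hge : ((s + δ : ℝ) : EReal) ≤ atTop.liminf (fun n : ℕ =>
          (((n : ℝ)⁻¹ : ℝ) : EReal) * (-(ENNReal.log (μ (bowenBall f n x ε)))
            + ((birkSum f ψ n x : ℝ) : EReal))) :=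
        le_liminf_of_le (by isBoundedDefault) (hcon.mono fun n hn => not_lt.mp hn)
      have : ((s + δ : ℝ) : EReal) ≤ (s : EReal) := hge.trans hlim
      rw [EReal.coe_le_coe_iff] at this
      linarith
    obtain ⟨n, hnN, hterm⟩ := frequently_atTop.mp hfreq (max N 1)
    refine ⟨n, le_trans (le_max_left _ _) hnN, hx, ?_⟩
    have hn1 : 1 ≤ n := le_trans (le_max_right _ _) hnN
    have hnpos : (0:ℝ) < n := by exact_mod_cast hn1
    set w : EReal := -(ENNReal.log (μ (bowenBall f n x ε)))
      + ((birkSum f ψ n x : ℝ) : EReal) with hw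
    have hdiv : w / ((n:ℝ) : EReal) ≤ ((s + δ : ℝ) : EReal) := by
      rw [EReal.div_eq_inv_mul, ← EReal.coe_inv]
      exact hterm.le
    have hle : w ≤ ((n:ℝ) : EReal) * ((s + δ : ℝ) : EReal) :=
      (EReal.div_le_iff_le_mul (by exact_mod_cast hnpos) (EReal.coe_ne_top _)).mp hdiv
    rw [← EReal.coe_mul] at hle
    have hlog : -(ENNReal.log (μ (bowenBall f n x ε)))
        ≤ (((n:ℝ) * (s + δ) - birkSum f ψ n x : ℝ) : EReal) := by
      rw [EReal.coe_sub]
      exact (EReal.le_sub_iff_add_le (Or.inr (EReal.coe_ne_bot _))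
        (Or.inr (EReal.coe_ne_top _))).mpr hle
    have hlog2 : ((birkSum f ψ n x - (s + δ) * n : ℝ) : EReal)
        ≤ ENNReal.log (μ (bowenBall f n x ε)) := by
      have h2 := EReal.neg_le.mp hlog
      rw [← EReal.coe_neg] at h2
      rw [show (birkSum f ψ n x - (s + δ) * n : ℝ)
        = -((n:ℝ) * (s + δ) - birkSum f ψ n x) by ring]
      exact h2
    have hexp := EReal.exp_monotone hlog2
    rw [ENNReal.exp_log, EReal.exp_coe] at hexp
    exact hexp
  -- Step 2: separated sets
  have hsep := fun n => exists_sep (f := f) hf n hε (A n)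
  choose E hEsub hEcov hEdisj using hsep
  -- Step 3: mass bound
  have hsum1 : ∀ n, (∑ x ∈ E n, ENNReal.ofReal (Real.exp (birkSum f ψ n x - (s + δ) * n)))
      ≤ 1 := by
    intro n
    have hmeas : ∀ x ∈ E n, MeasurableSet (bowenBall f n x ε) := fun x _ =>
      (isOpen_bowenBall hf).measurableSet
    calc ∑ x ∈ E n, ENNReal.ofReal (Real.exp (birkSum f ψ n x - (s + δ) * n))
        ≤ ∑ x ∈ E n, μ (bowenBall f n x ε) :=
          Finset.sum_le_sum fun x hx => (hEsub n (by exact_mod_cast hx)).2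
      _ = μ (⋃ x ∈ E n, bowenBall f n x ε) := (measure_biUnion_finset (hEdisj n) hmeas).symm
      _ ≤ 1 := prob_le_one
  set r : ℝ≥0∞ := ENNReal.ofReal (Real.exp (-δ)) with hr
  have hrlt : r < 1 := by
    rw [hr, ← ENNReal.ofReal_one]
    exact ENNReal.ofReal_lt_ofReal_iff_of_nonneg (Real.exp_pos _).le |>.mpr
      (by rw [show (1:ℝ) = Real.exp 0 by simp]; exact Real.exp_lt_exp.mpr (by linarith))
  -- Step 4: bound on MpreC at each level N
  have hbound : ∀ N : ℕ, MpreC f ψ Z N (s + 2 * δ) (2 * ε) ≤ r ^ N * (1 - r)⁻¹ := by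
    intro N
    set d : X := Classical.arbitrary X with hd
    set L : ℕ → List X := fun n => (E n).toList with hLdef
    set u : Set ℕ := {i | N ≤ i.unpair.1 ∧ i.unpair.2 < (L i.unpair.1).length} with hu
    set cx : ℕ → X := fun i => (L i.unpair.1).getD i.unpair.2 d with hcx
    set m : ℕ → ℕ := fun i => i.unpair.1 with hm
    set g : ℕ → ℝ≥0∞ := fun i => ENNReal.ofReal
      (Real.exp (-(s + 2 * δ) * (m i : ℝ) + birkSum f ψ (m i) (cx i))) with hgdef
    have hcover : Z ⊆ ⋃ i ∈ u, bowenBall f (m i) (cx i) (2 * ε) := by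
      intro z hz
      obtain ⟨n, hnN, hzA⟩ := hstep1 N z hz
      have hzc := hEcov n hzA
      rw [mem_iUnion₂] at hzc
      obtain ⟨x, hxE, hzx⟩ := hzc
      obtain ⟨j, hj, hxj⟩ := List.mem_iff_getElem.mp (Finset.mem_toList.mpr hxE)
      refine mem_iUnion₂.mpr ⟨Nat.pair n j, ?_, ?_⟩
      · show N ≤ (Nat.pair n j).unpair.1 ∧ _
        rw [Nat.unpair_pair]
        exact ⟨hnN, hj⟩
      · have hmx : m (Nat.pair n j) = n := by simp [hm, Nat.unpair_pair]
        have hcxx : cx (Nat.pair n j) = x := by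
          simp only [hcx, Nat.unpair_pair]
          rw [List.getD_eq_getElem _ _ hj]
          exact hxj
        rw [hmx, hcxx]
        exact hzx
    refine le_trans (sInf_le ⟨u, cx, m, fun i hi => hi.1, hcover, rfl⟩) ?_
    -- bound the series
    have key : ∀ n : ℕ, (∑' j : ℕ, u.indicator g (Nat.pair n j))
        ≤ (if N ≤ n then r ^ n else 0) := by
      intro n
      by_cases hNn : N ≤ n
      · rw [if_pos hNn]
        have h1 : (∑' j : ℕ, u.indicator g (Nat.pair n j))
            = ∑ j ∈ Finset.range (L n).length, u.indicator g (Nat.pair n j) := by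
          refine tsum_eq_sum ?_
          intro j hj
          refine Set.indicator_of_notMem ?_ _
          rw [hu, mem_setOf_eq, Nat.unpair_pair]
          rw [Finset.mem_range] at hj
          tauto
        rw [h1]
        have h2 : ∀ j ∈ Finset.range (L n).length, u.indicator g (Nat.pair n j)
            = ENNReal.ofReal (Real.exp (-(s + 2 * δ) * (n : ℝ)
              + birkSum f ψ n ((L n).getD j d))) := by
          intro j hj
          rw [Finset.mem_range] at hj
          rw [Set.indicator_of_mem (by rw [hu, mem_setOf_eq, Nat.unpair_pair]; exact ⟨hNn, hj⟩)]
          simp [hgdef, hm, hcx, Nat.unpair_pair]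
        rw [Finset.sum_congr rfl h2]
        have hinj : ∀ j1 ∈ Finset.range (L n).length, ∀ j2 ∈ Finset.range (L n).length,
            (L n).getD j1 d = (L n).getD j2 d → j1 = j2 := by
          intro j1 hj1 j2 hj2 heq
          rw [Finset.mem_range] at hj1 hj2
          rw [List.getD_eq_getElem _ _ hj1, List.getD_eq_getElem _ _ hj2] at heq
          exact (List.Nodup.getElem_inj_iff ((E n).nodup_toList)).mp heq
        have hsplit : ∀ x : X, ENNReal.ofReal (Real.exp (-(s + 2 * δ) * (n : ℝ)
              + birkSum f ψ n x))
            = r ^ n * ENNReal.ofReal (Real.exp (birkSum f ψ n x - (s + δ) * n)) := by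
          intro x
          rw [show -(s + 2 * δ) * (n : ℝ) + birkSum f ψ n x
              = (n : ℝ) * (-δ) + (birkSum f ψ n x - (s + δ) * n) by ring,
            Real.exp_add, ENNReal.ofReal_mul (Real.exp_pos _).le, Real.exp_nat_mul,
            ENNReal.ofReal_pow (Real.exp_pos _).le, ← hr]
        calc ∑ j ∈ Finset.range (L n).length, ENNReal.ofReal
              (Real.exp (-(s + 2 * δ) * (n : ℝ) + birkSum f ψ n ((L n).getD j d)))
            = ∑ x ∈ (Finset.range (L n).length).image (fun j => (L n).getD j d),
              ENNReal.ofReal (Real.exp (-(s + 2 * δ) * (n : ℝ) + birkSum f ψ n x)) := by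
              rw [Finset.sum_image hinj]
          _ ≤ ∑ x ∈ E n, ENNReal.ofReal
              (Real.exp (-(s + 2 * δ) * (n : ℝ) + birkSum f ψ n x)) := by
              refine Finset.sum_le_sum_of_subset ?_
              intro x hx
              rw [Finset.mem_image] at hx
              obtain ⟨j, hj, rfl⟩ := hx
              rw [Finset.mem_range] at hj
              rw [List.getD_eq_getElem _ _ hj]
              exact Finset.mem_toList.mp (List.getElem_mem _)
          _ = r ^ n * ∑ x ∈ E n, ENNReal.ofReal
              (Real.exp (birkSum f ψ n x - (s + δ) * n)) := by
              rw [Finset.mul_sum]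
              exact Finset.sum_congr rfl fun x _ => hsplit x
          _ ≤ r ^ n * 1 := mul_le_mul_right (hsum1 n) _
          _ = r ^ n := mul_one _
      · rw [if_neg hNn]
        have hz : ∀ j : ℕ, u.indicator g (Nat.pair n j) = 0 := by
          intro j
          refine Set.indicator_of_notMem ?_ _
          rw [hu, mem_setOf_eq, Nat.unpair_pair]
          tauto
        simp [hz]
    calc (∑' i : u, ENNReal.ofReal (Real.exp (-(s + 2 * δ) * (m i : ℝ)
            + birkSum f ψ (m i) (cx i))))
        = ∑' i : ℕ, u.indicator g i := tsum_subtype u g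
      _ = ∑' p : ℕ × ℕ, u.indicator g (Nat.pair p.1 p.2) :=
          (Equiv.tsum_eq Nat.pairEquiv (u.indicator g)).symm
      _ = ∑' n : ℕ, ∑' j : ℕ, u.indicator g (Nat.pair n j) :=
          ENNReal.tsum_prod (f := fun a b => u.indicator g (Nat.pair a b))
      _ ≤ ∑' n : ℕ, (if N ≤ n then r ^ n else 0) := ENNReal.tsum_le_tsum key
      _ = ∑' n : ℕ, r ^ (n + N) := by
          have hsupp : Function.support (fun n : ℕ => if N ≤ n then r ^ n else 0)
              ⊆ Set.range (· + N) := by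
            intro x hx
            rw [Function.mem_support] at hx
            by_cases hNx : N ≤ x
            · exact ⟨x - N, Nat.sub_add_cancel hNx⟩
            · simp [hNx] at hx
          calc ∑' n : ℕ, (if N ≤ n then r ^ n else 0)
              = ∑' i : ℕ, (if N ≤ i + N then r ^ (i + N) else 0) :=
                (Function.Injective.tsum_eq (add_left_injective N) hsupp).symm
            _ = ∑' i : ℕ, r ^ (i + N) := tsum_congr fun i => if_pos (by omega)
      _ = r ^ N * (1 - r)⁻¹ := by
          simp only [pow_add, ENNReal.tsum_mul_right, ENNReal.tsum_geometric]
          ring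
  -- Step 5: conclude
  rw [MlimC_eq_zero_iff]
  intro n0
  refine le_antisymm ?_ (zero_le)
  have hCne : (1 - r)⁻¹ ≠ ⊤ := by
    rw [ENNReal.inv_ne_top]
    intro hzero
    rw [tsub_eq_zero_iff_le] at hzero
    exact absurd hzero (not_le.mpr hrlt)
  have htend : Tendsto (fun N : ℕ => r ^ N * (1 - r)⁻¹) atTop (nhds 0) := by
    have h1 := ENNReal.tendsto_pow_atTop_nhds_zero_of_lt_one hrlt
    have h2 := ENNReal.Tendsto.mul_const h1 (Or.inr hCne)
    simpa using h2
  exact ge_of_tendsto htend (eventually_atTop.mpr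
    ⟨n0, fun N hN => (MpreC_mono_n hN).trans (hbound N)⟩)

end Aux4


/-- If the measure-theoretic local pressure satisfies `P_μ(x,ψ) ≤ s` for all
`x ∈ Z`, then the Pesin–Pitskel and weighted topological pressures of `Z` are at most `s`. -/
theorem statement0 [CompactSpace X] [BorelSpace X]
    (f : ℕ → X → X) (hf : ∀ n, Continuous (f n)) (ψ : X → ℝ) (hψ : Continuous ψ)
    (μ : Measure X) [IsProbabilityMeasure μ] (Z : Set X) (s : ℝ)
    (h : ∀ x ∈ Z, Ploc f μ ψ x ≤ (s : EReal)) :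
    PB f ψ Z ≤ (s : EReal) ∧ PW f ψ Z ≤ (s : EReal) := by
  have hXne : Nonempty X := by
    by_contra hne
    rw [not_nonempty_iff] at hne
    have h1 : μ univ = 1 := measure_univ
    rw [Set.univ_eq_empty_iff.mpr hne, measure_empty] at h1
    exact zero_ne_one h1
  obtain ⟨C, hC⟩ : ∃ C : ℝ, ∀ x : X, |ψ x| ≤ C := by
    obtain ⟨C, hC⟩ := isCompact_univ.exists_bound_of_continuousOn hψ.continuousOn
    exact ⟨C, fun x => by simpa [Real.norm_eq_abs] using hC x (mem_univ x)⟩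
  have hh : ∀ x ∈ Z, ∀ ε : ℝ, 0 < ε → atTop.liminf (fun n : ℕ =>
      (((n : ℝ)⁻¹ : ℝ) : EReal) * (-(ENNReal.log (μ (bowenBall f n x ε)))
        + ((birkSum f ψ n x : ℝ) : EReal))) ≤ (s : EReal) :=
    fun x hx => liminf_le_of_Ploc (h x hx)
  have hBC : ∀ ε : ℝ, 0 < ε → PBCeps f ψ Z ε ≤ (s : EReal) := by
    intro ε hε
    refine EReal_le_of_forall_add fun δ hδ => ?_
    have h0 : MlimC f ψ Z (s + 2 * (δ / 2)) (2 * (ε / 2)) = 0 :=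
      MlimC_zero hf μ Z s hh (half_pos hδ) (half_pos hε)
    rw [show 2 * (δ / 2) = δ by ring, show 2 * (ε / 2) = ε by ring] at h0
    exact sInf_le ⟨s + δ, h0, rfl⟩
  have hWCs : ∀ ε : ℝ, 0 < ε → PWCeps f ψ Z ε ≤ (s : EReal) := fun ε hε =>
    PWCeps_le_PBCeps.trans (hBC ε hε)
  have hBcl : ∀ δ : ℝ, 0 < δ → ∃ ε0 > 0, ∀ ε : ℝ, 0 < ε → ε ≤ ε0 →
      PBeps f ψ Z ε ≤ PBCeps f ψ Z ε + (δ : EReal) := by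
    intro δ hδ
    obtain ⟨ε0, hε0, hmod⟩ := exists_modulus (f := f) hψ hδ
    exact ⟨ε0, hε0, fun ε hε hle => PBeps_le_add hδ (hmod ε hε hle)⟩
  have hWcl : ∀ δ : ℝ, 0 < δ → ∃ ε0 > 0, ∀ ε : ℝ, 0 < ε → ε ≤ ε0 →
      PWeps f ψ Z ε ≤ PWCeps f ψ Z ε + (δ : EReal) := by
    intro δ hδ
    obtain ⟨ε0, hε0, hmod⟩ := exists_modulus (f := f) hψ hδ
    exact ⟨ε0, hε0, fun ε hε hle => PWeps_le_add hδ (hmod ε hε hle)⟩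
  have hBtend := tendsto_aux (PBCeps_anti (f := f) (ψ := ψ) (Z := Z))
    (fun ε hε => PBCeps_le_PBeps hC hε) hBcl
  have hWtend := tendsto_aux (PWCeps_anti (f := f) (ψ := ψ) (Z := Z))
    (fun ε hε => PWCeps_le_PWeps hC hε) hWcl
  constructor
  · have hPB : PB f ψ Z = sSup ((fun ε => PBCeps f ψ Z ε) '' Ioi 0) := by
      unfold PB
      exact hBtend.limUnder_eq
    rw [hPB]
    refine sSup_le ?_
    rintro _ ⟨ε, hε, rfl⟩
    exact hBC ε hε
  · have hPW : PW f ψ Z = sSup ((fun ε => PWCeps f ψ Z ε) '' Ioi 0) := by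
      unfold PW
      exact hWtend.limUnder_eq
    rw [hPW]
    refine sSup_le ?_
    rintro _ ⟨ε, hε, rfl⟩
    exact hWCs ε hε

end
end

section
/- Let (X,d) be a compact metric space, f_{1,∞} an NDS on X, and r > 0. Let ℬ(r) = { B_n(x,r) : x ∈ X, n ∈ ℕ } be the family of all Bowen balls of radius r. For any subfamily ℱ ⊆ ℬ(r), there exists a (not necessarily countable) subfamily 𝒢 ⊆ ℱ consisting of pairwise disjoint Bowen balls such that ∪_{B∈ℱ} B ⊆ ∪_{B_n(x,r)∈𝒢} B_n(x,3r). -/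
open Filter MeasureTheory Set ENNReal

noncomputable section

variable {X : Type} [MetricSpace X]

variable [MeasurableSpace X]

/-- Covering lemma for Bowen balls: from any family `ℱ` of Bowen balls of
radius `r` (indexed here by their parameters, order `n` and center `x`) one can extract a
pairwise disjoint subfamily `𝒢` whose `3r`-enlargements cover `⋃_{B ∈ ℱ} B`. -/
theorem statement12 [CompactSpace X]
    (f : ℕ → X → X) (hf : ∀ n, Continuous (f n))
    (r : ℝ) (hr : 0 < r) (F : Set (ℕ × X)) :
    ∃ G ⊆ F,
      (G.Pairwise fun p q => Disjoint (bowenBall f p.1 p.2 r) (bowenBall f q.1 q.2 r)) ∧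
      (⋃ p ∈ F, bowenBall f p.1 p.2 r) ⊆ ⋃ p ∈ G, bowenBall f p.1 p.2 (3 * r) := by
  obtain ⟨G, hGF, hGdisj, hcov⟩ :=
    Vitali.exists_disjoint_subfamily_covering_enlargement
      (fun p : ℕ × X => bowenBall f p.1 p.2 r) F (fun p => (1 / 2 : ℝ) ^ p.1) (3 / 2)
      (by norm_num) (fun p _ => by positivity) 1
      (fun p _ => by
        apply pow_le_one₀ <;> norm_num)
      (fun p _ => ⟨p.2, fun j _ => by simpa using hr⟩)
  refine ⟨G, hGF, hGdisj, ?_⟩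
  intro w hw
  simp only [Set.mem_iUnion] at hw ⊢
  obtain ⟨p, hpF, hpw⟩ := hw
  obtain ⟨q, hqG, ⟨z, hz1, hz2⟩, hδ⟩ := hcov p hpF
  -- from the size inequality, deduce q.1 ≤ p.1
  have hle : q.1 ≤ p.1 := by
    by_contra hlt
    push_neg at hlt
    have h1 : ((1 / 2 : ℝ)) ^ q.1 ≤ (1 / 2) ^ (p.1 + 1) := by
      apply pow_le_pow_of_le_one (by norm_num) (by norm_num) hlt
    have h2 : (3 / 2 : ℝ) * (1 / 2) ^ q.1 ≤ (3 / 4) * (1 / 2) ^ p.1 := by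
      rw [pow_succ] at h1
      nlinarith
    have h3 : (3 / 4 : ℝ) * (1 / 2) ^ p.1 < (1 / 2) ^ p.1 := by
      have : (0:ℝ) < (1 / 2) ^ p.1 := by positivity
      linarith
    linarith
  refine ⟨q, hqG, fun j hj => ?_⟩
  have hj' : j < p.1 := lt_of_lt_of_le hj hle
  have d1 : dist (nIter f j q.2) (nIter f j z) < r := hz2 j hj
  have d2 : dist (nIter f j p.2) (nIter f j z) < r := hz1 j hj'
  have d3 : dist (nIter f j p.2) (nIter f j w) < r := hpw j hj'
  calc dist (nIter f j q.2) (nIter f j w)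
      ≤ dist (nIter f j q.2) (nIter f j z) + dist (nIter f j z) (nIter f j p.2)
        + dist (nIter f j p.2) (nIter f j w) := dist_triangle4 _ _ _ _
    _ < r + r + r := by rw [dist_comm (nIter f j z)]; linarith
    _ = 3 * r := by ring

end
end
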